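/- Quadratic sufficient decrease under (SC1) and strong convexity (key inequality in the proof of Theorem 4.2). In the iBPDCA setting with stopping criterion (SC1), if in addition φ is μ-strongly convex on U (i.e., D_φ(y, x) ≥ (μ/2)‖y − x‖² for all x, y ∈ U) with μ > 0, then for every k: F(x^k) − F(x^{k+1}) ≥ (((2−σ)γ_min − L)·μ/2)·‖x^{k+1} − x^k‖². -/

import Mathlib

open Filter Topology Bornology RealInnerProductSpace
open scoped Classical

noncomputable section

/-- `ℝⁿ` with the Euclidean inner product. -/
abbrev E (n : ℕ) := EuclideanSpace ℝ (Fin n)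

/-- Bregman distance `D_φ(x, y) = φ(x) − φ(y) − ⟨∇φ(y), x − y⟩` associated with the
kernel `φ` whose gradient is `φ'`. -/
def breg {n : ℕ} (φ : E n → ℝ) (φ' : E n → E n) (x y : E n) : ℝ :=
  φ x - φ y - ⟪φ' y, x - y⟫

/-- `ε`-subdifferential at `x` of the extended-real-valued convex function that is equal
to `h` on its domain `S` and `+∞` outside `S`:
`∂_ε h(x) = {d : h(y) ≥ h(x) + ⟨d, y − x⟩ − ε for all y}` (the inequality being automatic
for `y ∉ S`). -/
def epsSubdiff {n : ℕ} (S : Set (E n)) (h : E n → ℝ) (ε : ℝ) (x : E n) : Set (E n) :=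
  {d | ∀ y ∈ S, h x + ⟪d, y - x⟫ - ε ≤ h y}

private lemma ibpdca_arith (L γmin γ σ μ t Da Db I δ R : ℝ)
    (hL : 0 ≤ L) (hγminpos : 0 < γmin) (hσ' : σ * γmin < γmin - L) (hσ0 : 0 ≤ σ)
    (hγk : γmin ≤ γ) (ht : 0 ≤ t) (hμ : 0 < μ)
    (hDa : μ / 2 * t ≤ Da) (hDb : μ / 2 * t ≤ Db)
    (hI : I ≤ σ * γ * Da - δ)
    (h4 : -I + γ * (Da + Db) - δ - L * Da ≤ R) :
    ((2 - σ) * γmin - L) * μ / 2 * t ≤ R := by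
  have hσ1 : σ ≤ 1 := by nlinarith
  have hc1 : 0 ≤ (1 - σ) * γ - L := by
    nlinarith [mul_nonneg (by linarith : (0:ℝ) ≤ 1 - σ) (sub_nonneg.2 hγk)]
  nlinarith [mul_le_mul_of_nonneg_left hDa hc1,
    mul_le_mul_of_nonneg_left hDb (by linarith : (0:ℝ) ≤ γ),
    mul_nonneg (mul_nonneg (by linarith : (0:ℝ) ≤ 2 - σ)
      (by linarith : (0:ℝ) ≤ γ - γmin)) (mul_nonneg (by positivity : (0:ℝ) ≤ μ / 2) ht)]

/-- Quadratic sufficient decrease under (SC1) and strong convexity of `φ`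
(key inequality in the proof of Theorem 4.2). -/
theorem ibpdca_sc1_quadratic_decrease
    {n : ℕ} (S U X : Set (E n)) (P₁ P₂ f φ : E n → ℝ)
    (f' φ' : E n → E n) (L γmin γmax σ : ℝ)
    (x : ℕ → E n) (γ δ : ℕ → ℝ) (ξ d Δ : ℕ → E n)
    -- `P₁` is proper, lower semicontinuous and convex (domain `S`, real values `P₁` on `S`)
    (hSne : S.Nonempty)
    (hP₁conv : ConvexOn ℝ S P₁)
    (hP₁lsc : LowerSemicontinuous (fun y => if y ∈ S then (P₁ y : EReal) else (⊤ : EReal)))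
    -- `P₂` is convex and continuous
    (hP₂conv : ConvexOn ℝ Set.univ P₂) (hP₂cont : Continuous P₂)
    -- `f` and `φ` are differentiable on the open convex set `U`, `φ` strictly convex on `U`
    (hUopen : IsOpen U) (hUconv : Convex ℝ U)
    (hfdiff : ∀ u ∈ U, HasGradientAt f (f' u) u)
    (hφdiff : ∀ u ∈ U, HasGradientAt φ (φ' u) u)
    (hφsc : StrictConvexOn ℝ U φ)
    -- `(f, φ)` is `L`-smooth adaptable restricted on `X`
    (hL : 0 ≤ L)
    (hsmad : ∀ u ∈ X, ∀ v ∈ X, |f v - f u - ⟪f' u, v - u⟫| ≤ L * breg φ φ' v u)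
    -- the iterates and the inexact optimality condition
    (hxmem : ∀ k, x k ∈ S ∩ U ∩ X)
    (hLγ : L < γmin) (hγ : ∀ k, γmin ≤ γ k ∧ γ k ≤ γmax)
    (hδpos : ∀ k, 0 ≤ δ k)
    (hξ : ∀ k, ξ k ∈ epsSubdiff Set.univ P₂ 0 (x k))
    (hd : ∀ k, d (k + 1) ∈ epsSubdiff S P₁ (δ k) (x (k + 1)))
    (hΔ : ∀ k, Δ k = d (k + 1) + f' (x k) - ξ k + γ k • (φ' (x (k + 1)) - φ' (x k)))
    -- the stopping criterion
    (hσ0 : 0 ≤ σ) (hσ : σ < (γmin - L) / γmin)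
    (hSC1 : ∀ k, ‖Δ k‖ ^ 2 + |⟪Δ k, x (k + 1) - x k⟫| + δ k
        ≤ σ * γ k * breg φ φ' (x (k + 1)) (x k))
    -- `φ` is `μ`-strongly convex on `U`
    (μ : ℝ) (hμ : 0 < μ)
    (hφsconv : ∀ u ∈ U, ∀ v ∈ U, μ / 2 * ‖v - u‖ ^ 2 ≤ breg φ φ' v u) :
    ∀ k, ((2 - σ) * γmin - L) * μ / 2 * ‖x (k + 1) - x k‖ ^ 2
      ≤ (P₁ (x k) - P₂ (x k) + f (x k))
          - (P₁ (x (k + 1)) - P₂ (x (k + 1)) + f (x (k + 1))) := by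
  intro k
  obtain ⟨⟨haS, haU⟩, haX⟩ := hxmem k
  obtain ⟨⟨hbS, hbU⟩, hbX⟩ := hxmem (k + 1)
  set a := x k with ha
  set b := x (k + 1) with hb
  have hγminpos : 0 < γmin := lt_of_le_of_lt hL hLγ
  have hσ' : σ * γmin < γmin - L := by
    have := (lt_div_iff₀ hγminpos).1 hσ
    linarith
  have hσ1 : σ ≤ 1 := by nlinarith
  have hγk : γmin ≤ γ k := (hγ k).1
  have hγkpos : 0 ≤ γ k := le_trans (le_of_lt hγminpos) hγk
  set Da := breg φ φ' b a with hDadef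
  set Db := breg φ φ' a b with hDbdef
  set t := ‖b - a‖ ^ 2 with htdef
  have ht : 0 ≤ t := sq_nonneg _
  have hDa : μ / 2 * t ≤ Da := hφsconv a haU b hbU
  have hDb : μ / 2 * t ≤ Db := by
    have := hφsconv b hbU a haU
    have hnorm : ‖a - b‖ = ‖b - a‖ := norm_sub_rev a b
    rw [hnorm] at this
    exact this
  -- subgradient inequalities
  have h1 : P₁ b + ⟪d (k + 1), a - b⟫ - δ k ≤ P₁ a := hd k a haS
  have h2 : P₂ a + ⟪ξ k, b - a⟫ - 0 ≤ P₂ b := hξ k b (Set.mem_univ b)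
  have h3 : f b - f a - ⟪f' a, b - a⟫ ≤ L * Da := (abs_le.1 (hsmad a haX b hbX)).2
  -- inner product identities
  have hsum : ⟪φ' b - φ' a, b - a⟫ = Da + Db := by
    simp only [hDadef, hDbdef, breg, inner_sub_left, inner_sub_right]
    ring
  have hΔi : ⟪Δ k, b - a⟫
      = ⟪d (k + 1), b - a⟫ + ⟪f' a, b - a⟫ - ⟪ξ k, b - a⟫ + γ k * (Da + Db) := by
    rw [hΔ k, ← hsum]
    simp only [inner_add_left, inner_sub_left, real_inner_smul_left]
    rfl
  have hdneg : ⟪d (k + 1), a - b⟫ = -⟪d (k + 1), b - a⟫ := by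
    rw [← inner_neg_right, neg_sub]
  -- stopping criterion consequences
  have hsc := hSC1 k
  have hI : ⟪Δ k, b - a⟫ ≤ σ * γ k * Da - δ k := by
    have h5 : ⟪Δ k, b - a⟫ ≤ |⟪Δ k, b - a⟫| := le_abs_self _
    nlinarith [sq_nonneg ‖Δ k‖]
  have h4 : -⟪Δ k, b - a⟫ + γ k * (Da + Db) - δ k - L * Da
      ≤ (P₁ a - P₂ a + f a) - (P₁ b - P₂ b + f b) := by
    linarith [h1, h2, h3, hΔi, hdneg]
  exact ibpdca_arith L γmin (γ k) σ μ t Da Db _ (δ k) _ hL hγminpos hσ' hσ0 hγk ht hμ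
    hDa hDb hI h4
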